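/- Fix ε > 0 and C > 0, and fix constants C₂, C₃ > 0. For each K with C·σ_K < 1/2, let S^{(K)} be the random walk with step-up probability p_K = 1/2 − C·σ_K started at 0. Then lim_{K→∞} e^{K^α} · P_0[ τ_{⌈C₃·ε·σ_K·K⌉} < τ_{−⌈C₂·ε·σ_K·K⌉} ] = 0. -/

import Mathlib

open MeasureTheory ProbabilityTheory Filter Set

/-- The simple random walk started at `j` with increments `ξ`. -/
noncomputable def walk {Ω : Type*} (j : ℤ) (ξ : ℕ → Ω → ℤ) (n : ℕ) (ω : Ω) : ℤ :=
  j + ∑ i ∈ Finset.range n, ξ i ω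

/-- The hitting time `τ_m = inf {n ≥ 0 : S_n = m}` (with `inf ∅ = ∞`) of the level `m`
by the walk started at `j` with increments `ξ`. -/
noncomputable def hitTime {Ω : Type*} (j : ℤ) (ξ : ℕ → Ω → ℤ) (m : ℤ) (ω : Ω) : ℕ∞ :=
  ⨅ (n : ℕ) (_ : walk j ξ n ω = m), (n : ℕ∞)

lemma step_mgf {Ω : Type*} [MeasurableSpace Ω] (P : Measure Ω) [IsProbabilityMeasure P]
    (X : Ω → ℤ) (hX : Measurable X) (p : ℝ) (hp0 : 0 ≤ p) (hp1 : p ≤ 1)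
    (h1 : P {ω | X ω = 1} = ENNReal.ofReal p)
    (h2 : P {ω | X ω = -1} = ENNReal.ofReal (1 - p)) (θ : ℝ) :
    Integrable (fun ω => Real.exp (θ * (X ω : ℝ))) P ∧
      mgf (fun ω => (X ω : ℝ)) P θ = p * Real.exp θ + (1 - p) * Real.exp (-θ) := by
  set A : Set Ω := {ω | X ω = 1} with hA_def
  set B : Set Ω := {ω | X ω = -1} with hB_def
  have hA : MeasurableSet A := hX (measurableSet_singleton 1)
  have hB : MeasurableSet B := hX (measurableSet_singleton (-1))
  have hdisj : Disjoint A B := by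
    rw [Set.disjoint_left]; intro ω h1' h2'; simp only [hA_def, hB_def, mem_setOf_eq] at h1' h2'
    omega
  have hunion : P (A ∪ B) = 1 := by
    rw [measure_union hdisj hB, h1, h2, ← ENNReal.ofReal_add hp0 (by linarith)]
    norm_num
  have hcompl : P (A ∪ B)ᶜ = 0 := by
    rw [measure_compl (hA.union hB) (measure_ne_top _ _), hunion, measure_univ, tsub_self]
  set g : Ω → ℝ := fun ω => A.indicator (fun _ => Real.exp θ) ω
      + B.indicator (fun _ => Real.exp (-θ)) ω with hg_def
  have hae : (fun ω => Real.exp (θ * (X ω : ℝ))) =ᵐ[P] g := by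
    have h0 : ∀ᵐ ω ∂P, ω ∈ A ∪ B := by
      rw [← compl_compl (A ∪ B)] at hunion ⊢
      exact (ae_iff).2 (by convert hcompl using 2; ext; simp)
    filter_upwards [h0] with ω hω
    rcases hω with hω | hω
    · have hω' : ω ∉ B := fun hB' => by
        simp only [hA_def, hB_def, mem_setOf_eq] at hω hB'; omega
      simp only [hg_def, Set.indicator_of_mem hω, Set.indicator_of_notMem hω']
      simp only [hA_def, mem_setOf_eq] at hω
      rw [hω]; push_cast; ring_nf
    · have hω' : ω ∉ A := fun hA' => by
        simp only [hA_def, hB_def, mem_setOf_eq] at hω hA'; omega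
      simp only [hg_def, Set.indicator_of_mem hω, Set.indicator_of_notMem hω']
      simp only [hB_def, mem_setOf_eq] at hω
      rw [hω]; push_cast; ring_nf
  have hintg : Integrable g P :=
    ((integrable_const _).indicator hA).add ((integrable_const _).indicator hB)
  have hint : Integrable (fun ω => Real.exp (θ * (X ω : ℝ))) P := hintg.congr hae.symm
  refine ⟨hint, ?_⟩
  have : mgf (fun ω => (X ω : ℝ)) P θ = ∫ ω, g ω ∂P := by
    rw [mgf]; exact integral_congr_ae hae
  rw [this, hg_def]
  rw [integral_add ((integrable_const _).indicator hA) ((integrable_const _).indicator hB),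
    integral_indicator_const _ hA, integral_indicator_const _ hB, measureReal_def, measureReal_def, h1, h2,
    ENNReal.toReal_ofReal hp0, ENNReal.toReal_ofReal (by linarith)]
  simp [smul_eq_mul, mul_comm]

lemma walk_hit_bound {Ω : Type*} [MeasurableSpace Ω] (P : Measure Ω) [IsProbabilityMeasure P]
    (ξ : ℕ → Ω → ℤ) (hmeas : ∀ n, Measurable (ξ n))
    (hind : iIndepFun ξ P)
    (p : ℝ) (hp0 : 0 ≤ p) (hp1 : p ≤ 1)
    (h1 : ∀ n, P {ω | ξ n ω = 1} = ENNReal.ofReal p)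
    (h2 : ∀ n, P {ω | ξ n ω = -1} = ENNReal.ofReal (1 - p))
    (θ : ℝ) (hθ : 0 ≤ θ) (r : ℝ) (hr0 : 0 ≤ r) (hr1 : r < 1)
    (hm : p * Real.exp θ + (1 - p) * Real.exp (-θ) ≤ r)
    (b : ℕ) :
    (P {ω | ∃ n, walk 0 ξ n ω = (b : ℤ)}).toReal
      ≤ Real.exp (-θ * b) * (1 - r)⁻¹ := by
  set Xr : ℕ → Ω → ℝ := fun i ω => ((ξ i ω : ℤ) : ℝ) with hXr_def
  have hXr_meas : ∀ i, Measurable (Xr i) := fun i =>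
    (Measurable.of_discrete (f := fun z : ℤ => (z : ℝ))).comp (hmeas i)
  have hindR : iIndepFun Xr P :=
    hind.comp (fun _ => fun z : ℤ => (z : ℝ)) (fun _ => Measurable.of_discrete)
  have hstep := fun i => step_mgf P (ξ i) (hmeas i) p hp0 hp1 (h1 i) (h2 i) θ
  -- per-n bound
  have key : ∀ n : ℕ, P {ω | walk 0 ξ n ω = (b : ℤ)}
      ≤ ENNReal.ofReal (Real.exp (-θ * b) * r ^ n) := by
    intro n
    have hsub : {ω | walk 0 ξ n ω = (b : ℤ)}
        ⊆ {ω | (b : ℝ) ≤ (∑ i ∈ Finset.range n, Xr i) ω} := by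
      intro ω hω
      simp only [mem_setOf_eq, walk, zero_add] at hω ⊢
      rw [Finset.sum_apply]
      simp only [hXr_def]
      exact_mod_cast le_of_eq hω.symm
    have hintS : Integrable (fun ω => Real.exp (θ * (∑ i ∈ Finset.range n, Xr i) ω)) P :=
      hindR.integrable_exp_mul_sum hXr_meas (fun i hi => (hstep i).1)
    have hch := measure_ge_le_exp_mul_mgf (μ := P) (X := ∑ i ∈ Finset.range n, Xr i)
      (b : ℝ) hθ hintS
    have hmgf : mgf (∑ i ∈ Finset.range n, Xr i) P θ
        = (p * Real.exp θ + (1 - p) * Real.exp (-θ)) ^ n := by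
      rw [hindR.mgf_sum hXr_meas]
      rw [Finset.prod_congr rfl (fun i _ => (hstep i).2), Finset.prod_const,
        Finset.card_range]
    have hb : (P {ω | walk 0 ξ n ω = (b : ℤ)}).toReal
        ≤ Real.exp (-θ * b) * r ^ n := by
      calc (P {ω | walk 0 ξ n ω = (b : ℤ)}).toReal
          ≤ (P {ω | (b : ℝ) ≤ (∑ i ∈ Finset.range n, Xr i) ω}).toReal :=
            ENNReal.toReal_mono (measure_ne_top _ _) (measure_mono hsub)
        _ ≤ Real.exp (-θ * b) * mgf (∑ i ∈ Finset.range n, Xr i) P θ := hch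
        _ ≤ Real.exp (-θ * b) * r ^ n := by
            rw [hmgf]
            have hmnn : 0 ≤ p * Real.exp θ + (1 - p) * Real.exp (-θ) := by
              nlinarith [Real.exp_pos θ, Real.exp_pos (-θ)]
            exact mul_le_mul_of_nonneg_left (pow_le_pow_left₀ hmnn hm n) (Real.exp_pos _).le
    calc P {ω | walk 0 ξ n ω = (b : ℤ)}
        = ENNReal.ofReal (P {ω | walk 0 ξ n ω = (b : ℤ)}).toReal :=
          (ENNReal.ofReal_toReal (measure_ne_top _ _)).symm
      _ ≤ ENNReal.ofReal (Real.exp (-θ * b) * r ^ n) := ENNReal.ofReal_le_ofReal hb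
  have hsum : Summable (fun n : ℕ => Real.exp (-θ * b) * r ^ n) :=
    (summable_geometric_of_lt_one hr0 hr1).mul_left _
  have hUn : {ω | ∃ n, walk 0 ξ n ω = (b : ℤ)}
      = ⋃ n, {ω | walk 0 ξ n ω = (b : ℤ)} := by
    ext ω; simp [mem_iUnion]
  calc (P {ω | ∃ n, walk 0 ξ n ω = (b : ℤ)}).toReal
      ≤ (ENNReal.ofReal (Real.exp (-θ * b) * (1 - r)⁻¹)).toReal := by
        apply ENNReal.toReal_mono (by simp)
        rw [hUn]
        refine (measure_iUnion_le _).trans ?_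
        refine (ENNReal.tsum_le_tsum key).trans ?_
        rw [← ENNReal.ofReal_tsum_of_nonneg
          (fun n => by positivity) hsum]
        rw [tsum_mul_left, tsum_geometric_of_lt_one hr0 hr1]
    _ ≤ Real.exp (-θ * b) * (1 - r)⁻¹ :=
        le_of_eq (ENNReal.toReal_ofReal (mul_nonneg (Real.exp_pos _).le
          (inv_nonneg.2 (by linarith))))

lemma hit_subset {Ω : Type*} (ξ : ℕ → Ω → ℤ) (b a : ℤ) :
    {ω | hitTime 0 ξ b ω < hitTime 0 ξ a ω} ⊆ {ω | ∃ n, walk 0 ξ n ω = b} := by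
  intro ω hω
  by_contra h
  simp only [mem_setOf_eq, not_exists] at h
  simp only [mem_setOf_eq] at hω
  have hb : hitTime 0 ξ b ω = ⊤ := by
    rw [hitTime]
    simp [h]
  rw [hb] at hω
  exact not_top_lt hω

lemma exp_quad {x : ℝ} (hx : |x| ≤ 1) : Real.exp x ≤ 1 + x + x ^ 2 := by
  have h := Real.exp_bound hx (n := 2) (by norm_num)
  have h2 : |Real.exp x - (1 + x)| ≤ |x| ^ 2 * (3 / (2 * 2)) := by
    convert h using 2 <;> simp [Finset.sum_range_succ]
  have h3 := (abs_sub_le_iff.1 h2).1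
  nlinarith [sq_abs x]

lemma tendsto_aux {α : ℝ} (hα0 : 0 < α) :
    Tendsto (fun x : ℝ => Real.log x + x ^ α - x ^ (2 * α)) atTop atBot := by
  have h1 : Tendsto (fun x : ℝ =>
      x ^ (2 * α) * (Real.log x / x ^ (2 * α) + x ^ (-α) - 1)) atTop atBot := by
    apply Tendsto.atTop_mul_neg (show (-1 : ℝ) < 0 by norm_num)
    · exact tendsto_rpow_atTop (by linarith)
    · have ha : Tendsto (fun x : ℝ => Real.log x / x ^ (2 * α)) atTop (nhds 0) :=
        (isLittleO_log_rpow_atTop (by linarith)).tendsto_div_nhds_zero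
      have hb : Tendsto (fun x : ℝ => x ^ (-α)) atTop (nhds 0) := tendsto_rpow_neg_atTop hα0
      have := (ha.add hb).sub_const 1
      simpa using this
  apply h1.congr'
  filter_upwards [eventually_gt_atTop 0] with x hx
  have hxne : x ^ (2 * α) ≠ 0 := (Real.rpow_pos_of_pos hx _).ne'
  have hsplit : x ^ (2 * α) * x ^ (-α) = x ^ α := by
    rw [← Real.rpow_add hx]; ring_nf
  rw [mul_sub, mul_add, mul_div_cancel₀ _ hxne, hsplit, mul_one]

set_option maxHeartbeats 1000000 in
theorem stmt8 (α : ℝ) (hα : α ∈ Set.Ioo (0 : ℝ) (1 / 2))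
    (σ : ℕ → ℝ) (hσpos : ∀ K, 0 < σ K)
    (hσ0 : Tendsto σ atTop (nhds 0))
    (hσK : Tendsto (fun K : ℕ => (K : ℝ) ^ ((1 : ℝ) / 2 - α) * σ K) atTop atTop)
    (ε C C₂ C₃ : ℝ) (hε : 0 < ε) (hC : 0 < C) (hC₂ : 0 < C₂) (hC₃ : 0 < C₃)
    (Ω : ℕ → Type*) (mΩ : ∀ K, MeasurableSpace (Ω K))
    (P : ∀ K, Measure (Ω K)) (hP : ∀ K, IsProbabilityMeasure (P K))
    (ξ : ∀ K, ℕ → Ω K → ℤ) (hmeas : ∀ K n, Measurable (ξ K n))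
    (hindep : ∀ K, C * σ K < 1 / 2 → iIndepFun (ξ K) (P K))
    (hup : ∀ K, C * σ K < 1 / 2 → ∀ n,
      P K {ω | ξ K n ω = 1} = ENNReal.ofReal (1 / 2 - C * σ K))
    (hdown : ∀ K, C * σ K < 1 / 2 → ∀ n,
      P K {ω | ξ K n ω = -1} = ENNReal.ofReal (1 - (1 / 2 - C * σ K))) :
    Tendsto (fun K : ℕ =>
      Real.exp ((K : ℝ) ^ α) *
        (P K {ω | hitTime 0 (ξ K) ((⌈C₃ * ε * σ K * (K : ℝ)⌉₊ : ℕ) : ℤ) ω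
            < hitTime 0 (ξ K) (-((⌈C₂ * ε * σ K * (K : ℝ)⌉₊ : ℕ) : ℤ)) ω}).toReal)
      atTop (nhds 0) := by
  obtain ⟨hα0, hα2⟩ := hα
  set c : ℝ := C * C₃ * ε with hc_def
  have hc : 0 < c := by positivity
  -- the dominating sequence tends to 0
  have hbound : Tendsto (fun K : ℕ => (1 / C ^ 2) *
      Real.exp (Real.log K + (K : ℝ) ^ α - (K : ℝ) ^ (2 * α))) atTop (nhds 0) := by
    have h1 : Tendsto (fun K : ℕ => Real.log K + (K : ℝ) ^ α - (K : ℝ) ^ (2 * α))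
        atTop atBot := (tendsto_aux hα0).comp tendsto_natCast_atTop_atTop
    have h2 := Real.tendsto_exp_atBot.comp h1
    have := h2.const_mul (1 / C ^ 2)
    simpa using this
  apply squeeze_zero' _ _ hbound
  · filter_upwards with K
    positivity
  · have E1 : ∀ᶠ K : ℕ in atTop, σ K < 1 / (4 * C) :=
      hσ0.eventually (gt_mem_nhds (by positivity))
    have E2 : ∀ᶠ K : ℕ in atTop,
        max 1 (1 / Real.sqrt c) ≤ (K : ℝ) ^ ((1 : ℝ) / 2 - α) * σ K :=
      hσK.eventually_ge_atTop _
    have E3 : ∀ᶠ K : ℕ in atTop, (1 : ℝ) ≤ (K : ℝ) := by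
      filter_upwards [eventually_ge_atTop 1] with K hK
      exact_mod_cast hK
    filter_upwards [E1, E2, E3] with K hK1 hK2 hK3
    letI := mΩ K
    haveI := hP K
    have hσK' : 0 < σ K := hσpos K
    have hCσ : C * σ K < 1 / 4 := by
      rw [lt_div_iff₀ (by positivity)] at hK1
      linarith [hK1]
    have hhalf : C * σ K < 1 / 2 := by linarith
    have hKpos : (0 : ℝ) < K := by linarith
    set θ : ℝ := C * σ K with hθ_def
    have hθ0 : 0 < θ := by positivity
    set b : ℕ := ⌈C₃ * ε * σ K * (K : ℝ)⌉₊ with hb_def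
    set u : ℝ := (K : ℝ) ^ ((1 : ℝ) / 2 - α) * σ K with hu_def
    have hu1 : 1 ≤ u := le_trans (le_max_left _ _) hK2
    have hcu : 1 ≤ c * u ^ 2 := by
      have hs : 0 < Real.sqrt c := Real.sqrt_pos.2 hc
      have h1 : 1 / Real.sqrt c ≤ u := le_trans (le_max_right _ _) hK2
      have h2 : Real.sqrt c ^ 2 = c := Real.sq_sqrt hc.le
      have h3 : 1 ≤ Real.sqrt c * u := by
        rw [div_le_iff₀ hs] at h1
        linarith [h1]
      nlinarith [h3, hs, hu1]
    -- key identity : σ² K = u² K^{2α}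
    have hid : σ K ^ 2 * (K : ℝ) = u ^ 2 * (K : ℝ) ^ (2 * α) := by
      have h1 : ((K : ℝ) ^ ((1 : ℝ) / 2 - α)) ^ 2 * (K : ℝ) ^ (2 * α) = (K : ℝ) := by
        rw [← Real.rpow_natCast ((K : ℝ) ^ ((1 : ℝ) / 2 - α)) 2,
          ← Real.rpow_mul hKpos.le, ← Real.rpow_add hKpos]
        push_cast
        rw [show (1 / 2 - α) * 2 + 2 * α = (1 : ℝ) by ring, Real.rpow_one]
      calc σ K ^ 2 * (K : ℝ)
          = σ K ^ 2 * (((K : ℝ) ^ ((1 : ℝ) / 2 - α)) ^ 2 * (K : ℝ) ^ (2 * α)) := by rw [h1]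
        _ = u ^ 2 * (K : ℝ) ^ (2 * α) := by rw [hu_def]; ring
    have hK2α1 : (1 : ℝ) ≤ (K : ℝ) ^ (2 * α) := Real.one_le_rpow hK3 (by linarith)
    have hσ2K : 1 ≤ σ K ^ 2 * (K : ℝ) := by
      rw [hid]
      nlinarith [hu1, hK2α1]
    -- the probability bound
    have hPb : (P K {ω | hitTime 0 (ξ K) ((b : ℕ) : ℤ) ω
          < hitTime 0 (ξ K) (-((⌈C₂ * ε * σ K * (K : ℝ)⌉₊ : ℕ) : ℤ)) ω}).toReal
        ≤ Real.exp (-θ * b) * ((C * σ K) ^ 2)⁻¹ := by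
      have hsub := hit_subset (ξ K) ((b : ℕ) : ℤ)
        (-((⌈C₂ * ε * σ K * (K : ℝ)⌉₊ : ℕ) : ℤ))
      have step1 : (P K {ω | hitTime 0 (ξ K) ((b : ℕ) : ℤ) ω
            < hitTime 0 (ξ K) (-((⌈C₂ * ε * σ K * (K : ℝ)⌉₊ : ℕ) : ℤ)) ω}).toReal
          ≤ (P K {ω | ∃ n, walk 0 (ξ K) n ω = ((b : ℕ) : ℤ)}).toReal :=
        ENNReal.toReal_mono (measure_ne_top _ _) (measure_mono hsub)
      have e1 : Real.exp θ ≤ 1 + θ + θ ^ 2 :=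
        exp_quad (by rw [abs_of_nonneg hθ0.le]; linarith)
      have e2 : Real.exp (-θ) ≤ 1 - θ + θ ^ 2 := by
        have := exp_quad (x := -θ) (by rw [abs_neg, abs_of_nonneg hθ0.le]; linarith)
        nlinarith [this]
      have hp0 : (0 : ℝ) ≤ 1 / 2 - C * σ K := by linarith
      have hp1 : (1 : ℝ) / 2 - C * σ K ≤ 1 := by linarith
      have hm : (1 / 2 - C * σ K) * Real.exp θ + (1 - (1 / 2 - C * σ K)) * Real.exp (-θ)
          ≤ 1 - (C * σ K) ^ 2 := by
        have q1 : (1 / 2 - C * σ K) * Real.exp θ ≤ (1 / 2 - C * σ K) * (1 + θ + θ ^ 2) :=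
          mul_le_mul_of_nonneg_left e1 hp0
        have q2 : (1 - (1 / 2 - C * σ K)) * Real.exp (-θ)
            ≤ (1 - (1 / 2 - C * σ K)) * (1 - θ + θ ^ 2) :=
          mul_le_mul_of_nonneg_left e2 (by linarith)
        have hmid : (1 / 2 - C * σ K) * (1 + θ + θ ^ 2)
            + (1 - (1 / 2 - C * σ K)) * (1 - θ + θ ^ 2) = 1 - (C * σ K) ^ 2 := by
          rw [hθ_def]; ring
        linarith
      have step2 := walk_hit_bound (P K) (ξ K) (hmeas K) (hindep K hhalf)
        (1 / 2 - C * σ K) hp0 hp1 (hup K hhalf) (hdown K hhalf)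
        θ hθ0.le (1 - (C * σ K) ^ 2)
        (by nlinarith [hθ0, hCσ] : (0 : ℝ) ≤ 1 - (C * σ K) ^ 2)
        (by nlinarith [hθ0] : 1 - (C * σ K) ^ 2 < 1) hm b
      have h1r : 1 - (1 - (C * σ K) ^ 2) = (C * σ K) ^ 2 := by ring
      rw [h1r] at step2
      exact step1.trans step2
    -- numeric estimates
    have hbge : C₃ * ε * σ K * (K : ℝ) ≤ (b : ℝ) := Nat.le_ceil _
    have hexp1 : Real.exp (-θ * b) ≤ Real.exp (-((K : ℝ) ^ (2 * α))) := by
      apply Real.exp_le_exp.2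
      have h1 : (K : ℝ) ^ (2 * α) ≤ c * (σ K ^ 2 * (K : ℝ)) := by
        rw [hid]
        nlinarith [hcu, hK2α1, Real.rpow_pos_of_pos hKpos (2 * α)]
      have h2 : c * (σ K ^ 2 * (K : ℝ)) ≤ θ * b := by
        rw [hθ_def, hc_def]
        nlinarith [hbge, hσK', hC.le, hε.le, hC₃.le, mul_le_mul_of_nonneg_left hbge
          (show (0:ℝ) ≤ C * σ K by positivity)]
      linarith
    have hinv : ((C * σ K) ^ 2)⁻¹ ≤ (K : ℝ) / C ^ 2 := by
      rw [mul_pow, inv_eq_one_div, div_le_div_iff₀ (by positivity) (by positivity)]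
      nlinarith [hσ2K]
    calc Real.exp ((K : ℝ) ^ α) * (P K {ω | hitTime 0 (ξ K) ((b : ℕ) : ℤ) ω
          < hitTime 0 (ξ K) (-((⌈C₂ * ε * σ K * (K : ℝ)⌉₊ : ℕ) : ℤ)) ω}).toReal
        ≤ Real.exp ((K : ℝ) ^ α)
            * (Real.exp (-((K : ℝ) ^ (2 * α))) * ((K : ℝ) / C ^ 2)) := by
          exact mul_le_mul_of_nonneg_left (hPb.trans
            (mul_le_mul hexp1 hinv (inv_nonneg.2 (by positivity)) (Real.exp_pos _).le))
            (Real.exp_pos _).le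
      _ = (1 / C ^ 2) * Real.exp (Real.log K + (K : ℝ) ^ α - (K : ℝ) ^ (2 * α)) := by
          rw [show Real.log K + (K : ℝ) ^ α - (K : ℝ) ^ (2 * α)
              = Real.log K + ((K : ℝ) ^ α + -((K : ℝ) ^ (2 * α))) by ring,
            Real.exp_add, Real.exp_add, Real.exp_log hKpos, Real.exp_neg]
          ring
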